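/- Every generic discrete Morse function F on a finite regular cell complex X can be modified to a tame generic discrete Morse function F̃ with the same set of critical cells. Moreover F̃ can be chosen to agree with F except on cells β appearing in pairs violating tameness, where only the values F(β) are changed. -/
import Mathlib


/-- A finite regular cell complex, modeled combinatorially as a finite graded poset of
cells: `face α β` means `α` is a (proper, iterated) face of `β`.  Regularity provides the
diamond property (between a cell and a codimension-two face there are at least two
intermediate cells) and existence of intermediate cells in any interval. -/
structure RegularCellComplex where
  Cell : Type
  [fintypeCell : Fintype Cell]
  [decEqCell : DecidableEq Cell]
  face : Cell → Cell → Prop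
  dim : Cell → ℕ
  face_trans : ∀ {α β γ}, face α β → face β γ → face α γ
  face_dim : ∀ {α β}, face α β → dim α < dim β
  diamond : ∀ {α β}, face α β → dim β = dim α + 2 →
    ∃ δ₁ δ₂, δ₁ ≠ δ₂ ∧ dim δ₁ = dim α + 1 ∧ dim δ₂ = dim α + 1 ∧
      face α δ₁ ∧ face δ₁ β ∧ face α δ₂ ∧ face δ₂ β
  interval : ∀ {α β}, face α β → dim α + 2 ≤ dim β →
    ∃ δ, dim δ = dim α + 1 ∧ face α δ ∧ face δ β

attribute [instance] RegularCellComplex.fintypeCell RegularCellComplex.decEqCell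

/-- `F` is a discrete Morse function (Forman): for each cell there is at most one
coface of dimension one higher with value `≤`, and at most one face of dimension one
lower with value `≥`. -/
def IsDiscreteMorse (X : RegularCellComplex) (F : X.Cell → ℝ) : Prop :=
  ∀ α : X.Cell,
    {β | X.face α β ∧ X.dim β = X.dim α + 1 ∧ F β ≤ F α}.Subsingleton ∧
    {γ | X.face γ α ∧ X.dim γ + 1 = X.dim α ∧ F α ≤ F γ}.Subsingleton

/-- `F` is generic: distinct values on incident cells. -/
def IsGeneric (X : RegularCellComplex) (F : X.Cell → ℝ) : Prop :=
  ∀ {α β : X.Cell}, X.face α β → F α ≠ F β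

/-- `F` is tame: faces of codimension at least two have strictly smaller value. -/
def IsTame (X : RegularCellComplex) (F : X.Cell → ℝ) : Prop :=
  ∀ {α β : X.Cell}, X.face α β → X.dim α + 2 ≤ X.dim β → F α < F β

/-- A cell `α` is critical for `F`: no exceptional coface and no exceptional face. -/
def IsCritical (X : RegularCellComplex) (F : X.Cell → ℝ) (α : X.Cell) : Prop :=
  (¬ ∃ β, X.face α β ∧ X.dim β = X.dim α + 1 ∧ F β ≤ F α) ∧
  (¬ ∃ γ, X.face γ α ∧ X.dim γ + 1 = X.dim α ∧ F α ≤ F γ)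

open scoped Classical

noncomputable section Stmt10Aux

namespace Stmt10

variable (X : RegularCellComplex) (F : X.Cell → ℝ)

/-- codimension-≥2 faces of `β`. -/
def Sset (β : X.Cell) : Set X.Cell := {α | X.face α β ∧ X.dim α + 2 ≤ X.dim β}

/-- `β` is the top of a tameness-violating pair. -/
def Bad (β : X.Cell) : Prop := ∃ α, α ∈ Sset X β ∧ F β ≤ F α

/-- the closure of `β` : `β` together with all its faces. -/
def cl (β : X.Cell) : Set X.Cell := insert β {x | X.face x β}

/-- max of `F` over the closure of `β`. -/
def V (β : X.Cell) : ℝ := sSup (F '' cl X β)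

/-- an upper bound for dimensions. -/
def NN : ℕ := Finset.univ.sup X.dim

def Dset : Set ℝ := {d | ∃ x y : X.Cell, F x ≠ F y ∧ d = |F x - F y|}

/-- the minimal positive gap between values of `F` (or 1 if none). -/
def Dgap : ℝ := if h : (Dset X F).Nonempty then sInf (Dset X F) else 1

def eps : ℝ := Dgap X F / (2 * ((NN X : ℝ) + 2) ^ 2)

lemma dim_le (β : X.Cell) : X.dim β ≤ NN X := Finset.le_sup (Finset.mem_univ β)

lemma Dset_finite : (Dset X F).Finite := by
  apply Set.Finite.subset (Set.finite_range (fun p : X.Cell × X.Cell => |F p.1 - F p.2|))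
  rintro d ⟨x, y, _, rfl⟩
  exact ⟨(x, y), rfl⟩

lemma Dgap_pos : 0 < Dgap X F := by
  rw [Dgap]
  split_ifs with h
  · obtain ⟨x, y, hxy, hd⟩ := h.csInf_mem (Dset_finite X F)
    rw [hd]
    exact abs_pos.mpr (sub_ne_zero.mpr hxy)
  · exact one_pos

lemma Dgap_le {x y : X.Cell} (h : F x ≠ F y) : Dgap X F ≤ |F x - F y| := by
  have hmem : |F x - F y| ∈ Dset X F := ⟨x, y, h, rfl⟩
  rw [Dgap, dif_pos ⟨_, hmem⟩]
  exact csInf_le (Dset_finite X F).bddBelow hmem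

lemma gapF {x y : X.Cell} (h : F x < F y) : F x + Dgap X F ≤ F y := by
  have h1 := Dgap_le X F (ne_of_lt h)
  rw [abs_sub_comm, abs_of_pos (by linarith)] at h1
  linarith

lemma eps_pos : 0 < eps X F := by
  have := Dgap_pos X F
  have h2 : (0:ℝ) < 2 * ((NN X : ℝ) + 2) ^ 2 := by positivity
  exact div_pos this h2

lemma eps_nonneg : 0 ≤ eps X F := le_of_lt (eps_pos X F)

lemma eps_lt (d : ℕ) (hd : d ≤ NN X) : ((d : ℝ) + 1) ^ 2 * eps X F < Dgap X F := by
  have hD := Dgap_pos X F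
  have hdR : (d : ℝ) ≤ (NN X : ℝ) := Nat.cast_le.mpr hd
  have h2 : (0:ℝ) < 2 * ((NN X : ℝ) + 2) ^ 2 := by positivity
  have key : ((d : ℝ) + 1) ^ 2 / (2 * ((NN X : ℝ) + 2) ^ 2) < 1 := by
    rw [div_lt_one h2]
    nlinarith
  calc ((d : ℝ) + 1) ^ 2 * eps X F
      = (((d : ℝ) + 1) ^ 2 / (2 * ((NN X : ℝ) + 2) ^ 2)) * Dgap X F := by
        rw [eps]; ring
    _ < 1 * Dgap X F := mul_lt_mul_of_pos_right key hD
    _ = Dgap X F := one_mul _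

lemma csq (a b : ℕ) (h : a + 2 ≤ b) :
    ((a : ℝ) + 1) ^ 2 + ((b : ℝ) + 1) ≤ ((b : ℝ) + 1) ^ 2 := by
  have hr : (a : ℝ) + 2 ≤ (b : ℝ) := by exact_mod_cast h
  have ha : (0:ℝ) ≤ (a : ℝ) := Nat.cast_nonneg a
  nlinarith

def Mval (β : X.Cell) (prev : X.Cell → ℝ) : ℝ := sSup (prev '' Sset X β)

lemma pick_exists (β : X.Cell) (prev : X.Cell → ℝ) :
    ∃ v : ℝ,
      v ∈ Set.Ioo (Mval X β prev + (X.dim β : ℝ) * eps X F)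
        (Mval X β prev + ((X.dim β : ℝ) + 1) * eps X F) ∧
      v ∉ Set.range F ∧ v ∉ prev '' {γ | X.dim γ < X.dim β} := by
  have hε := eps_pos X F
  have hlt : Mval X β prev + (X.dim β : ℝ) * eps X F
      < Mval X β prev + ((X.dim β : ℝ) + 1) * eps X F := by nlinarith
  have hinf := Set.Ioo_infinite hlt
  have hfin : (Set.range F ∪ prev '' {γ | X.dim γ < X.dim β}).Finite :=
    (Set.finite_range F).union ((Set.toFinite _).image prev)
  obtain ⟨v, hv⟩ := (hinf.diff hfin).nonempty
  refine ⟨v, hv.1, ?_, ?_⟩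
  · exact fun h => hv.2 (Set.mem_union_left _ h)
  · exact fun h => hv.2 (Set.mem_union_right _ h)

def pick (β : X.Cell) (prev : X.Cell → ℝ) : ℝ := Classical.choose (pick_exists X F β prev)

def H : ℕ → X.Cell → ℝ
  | 0 => F
  | d + 1 => fun β =>
      if X.dim β = d then (if Bad X F β then pick X F β (H d) else F β) else H d β

/-- The modified Morse function. -/
def G : X.Cell → ℝ := fun β => H X F (X.dim β + 1) β

lemma H_eq_G : ∀ d (β : X.Cell), X.dim β < d → H X F d β = G X F β := by
  intro d
  induction d with
  | zero => intro β h; omega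
  | succ d ih =>
    intro β h
    by_cases hd : X.dim β = d
    · show H X F (d+1) β = H X F (X.dim β + 1) β
      rw [hd]
    · have h' : X.dim β < d := by omega
      calc H X F (d+1) β = H X F d β := by simp [H, hd]
        _ = G X F β := ih β h'

lemma G_good {β : X.Cell} (h : ¬ Bad X F β) : G X F β = F β := by
  simp [G, H, h]

lemma G_bad {β : X.Cell} (h : Bad X F β) :
    G X F β = pick X F β (H X F (X.dim β)) := by
  simp [G, H, h]

/-- max of `G` over deep faces. -/
def MG (β : X.Cell) : ℝ := sSup (G X F '' Sset X β)

lemma G_bad_spec {β : X.Cell} (h : Bad X F β) :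
    (G X F β ∈ Set.Ioo (MG X F β + (X.dim β : ℝ) * eps X F)
        (MG X F β + ((X.dim β : ℝ) + 1) * eps X F)) ∧
      G X F β ∉ Set.range F ∧ G X F β ∉ G X F '' {γ | X.dim γ < X.dim β} := by
  have himg : H X F (X.dim β) '' Sset X β = G X F '' Sset X β :=
    Set.image_congr fun α hα => H_eq_G X F _ α (by
      have := hα.2; omega)
  have himg2 : H X F (X.dim β) '' {γ | X.dim γ < X.dim β}
      = G X F '' {γ | X.dim γ < X.dim β} :=
    Set.image_congr fun γ hγ => H_eq_G X F _ γ hγ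
  obtain ⟨h1, h2, h3⟩ := Classical.choose_spec (pick_exists X F β (H X F (X.dim β)))
  have hgb : G X F β = Classical.choose (pick_exists X F β (H X F (X.dim β))) := by
    rw [G_bad X F h, pick]
  have hM : Mval X β (H X F (X.dim β)) = MG X F β := by
    unfold Mval MG
    rw [himg]
  refine ⟨?_, ?_, ?_⟩
  · rw [hgb, ← hM]
    exact h1
  · rw [hgb]
    exact h2
  · rw [hgb, ← himg2]
    exact h3

lemma le_MG {α β : X.Cell} (h : α ∈ Sset X β) : G X F α ≤ MG X F β :=
  le_csSup ((Set.toFinite _).image _).bddAbove ⟨α, h, rfl⟩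

lemma MG_le {β : X.Cell} {c : ℝ} (hne : (Sset X β).Nonempty)
    (h : ∀ α ∈ Sset X β, G X F α ≤ c) : MG X F β ≤ c := by
  apply csSup_le (hne.image _)
  rintro v ⟨α, hα, rfl⟩
  exact h α hα

lemma MG_mem {β : X.Cell} (hne : (Sset X β).Nonempty) :
    ∃ α ∈ Sset X β, MG X F β = G X F α := by
  obtain ⟨α, hα, hv⟩ := (hne.image (G X F)).csSup_mem ((Set.toFinite _).image _)
  exact ⟨α, hα, hv.symm⟩

lemma self_mem_cl (β : X.Cell) : β ∈ cl X β := Set.mem_insert _ _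

lemma face_mem_cl {x β : X.Cell} (h : X.face x β) : x ∈ cl X β :=
  Set.mem_insert_of_mem _ h

lemma le_V {x β : X.Cell} (h : x ∈ cl X β) : F x ≤ V X F β :=
  le_csSup ((Set.toFinite _).image _).bddAbove ⟨x, h, rfl⟩

lemma V_mem (β : X.Cell) : ∃ x ∈ cl X β, V X F β = F x := by
  obtain ⟨x, hx, hv⟩ :=
    (Set.Nonempty.image F ⟨β, self_mem_cl X β⟩).csSup_mem ((Set.toFinite _).image _)
  exact ⟨x, hx, hv.symm⟩

lemma GB (β : X.Cell) :
    F β ≤ G X F β ∧ G X F β ≤ V X F β + ((X.dim β : ℝ) + 1) ^ 2 * eps X F := by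
  have good : ∀ γ : X.Cell, ¬ Bad X F γ →
      F γ ≤ G X F γ ∧ G X F γ ≤ V X F γ + ((X.dim γ : ℝ) + 1) ^ 2 * eps X F := by
    intro γ hγ
    rw [G_good X F hγ]
    refine ⟨le_rfl, ?_⟩
    have h1 := le_V X F (self_mem_cl X γ)
    have h2 : (0:ℝ) ≤ ((X.dim γ : ℝ) + 1) ^ 2 * eps X F :=
      mul_nonneg (by positivity) (eps_nonneg X F)
    linarith
  have main : ∀ d (β : X.Cell), X.dim β ≤ d →
      F β ≤ G X F β ∧ G X F β ≤ V X F β + ((X.dim β : ℝ) + 1) ^ 2 * eps X F := by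
    intro d
    induction d with
    | zero =>
      intro β hβ
      apply good
      rintro ⟨α, ⟨_, hd2⟩, _⟩
      omega
    | succ d ih =>
      intro β hβ
      by_cases hb : Bad X F β
      · obtain ⟨spec1, -, -⟩ := G_bad_spec X F hb
        obtain ⟨hlo, hhi⟩ := spec1
        obtain ⟨α₀, hα₀S, hα₀v⟩ := hb
        have ih₀ := ih α₀ (by have := hα₀S.2; omega)
        have hMG₀ := le_MG X F hα₀S
        have hεd : (0:ℝ) ≤ (X.dim β : ℝ) * eps X F :=
          mul_nonneg (Nat.cast_nonneg _) (eps_nonneg X F)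
        constructor
        · linarith [ih₀.1]
        · obtain ⟨αm, hαmS, hMGeq⟩ := MG_mem X F ⟨α₀, hα₀S⟩
          have ihm := ih αm (by have := hαmS.2; omega)
          have hVm : V X F αm ≤ V X F β := by
            obtain ⟨x₀, hx₀, hVeq⟩ := V_mem X F αm
            rw [hVeq]
            apply le_V
            rcases hx₀ with rfl | hx₀f
            · exact face_mem_cl X hαmS.1
            · exact face_mem_cl X (X.face_trans hx₀f hαmS.1)
          have hsq := csq (X.dim αm) (X.dim β) hαmS.2
          have hmul := mul_le_mul_of_nonneg_right hsq (eps_nonneg X F)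
          rw [hMGeq] at hhi
          have := ihm.2
          nlinarith
      · exact good β hb
  exact main (X.dim β) β le_rfl

lemma G_ge (β : X.Cell) : F β ≤ G X F β := (GB X F β).1

lemma G_le (β : X.Cell) :
    G X F β ≤ V X F β + ((X.dim β : ℝ) + 1) ^ 2 * eps X F := (GB X F β).2

/- ## Structural lemmas depending on the Morse hypotheses -/

lemma chain : ∀ {γ τ : X.Cell}, X.face γ τ → X.dim γ + 2 ≤ X.dim τ →
    ∃ μ, X.face γ μ ∧ X.face μ τ ∧ X.dim μ + 1 = X.dim τ := by
  suffices h : ∀ n (γ τ : X.Cell), X.dim τ - X.dim γ ≤ n → X.face γ τ →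
      X.dim γ + 2 ≤ X.dim τ →
      ∃ μ, X.face γ μ ∧ X.face μ τ ∧ X.dim μ + 1 = X.dim τ by
    intro γ τ h1 h2; exact h _ γ τ le_rfl h1 h2
  intro n
  induction n with
  | zero => intro γ τ hn _ hd; omega
  | succ n ih =>
    intro γ τ hn hf hd
    obtain ⟨δ, hδd, hγδ, hδτ⟩ := X.interval hf hd
    by_cases h2 : X.dim δ + 1 = X.dim τ
    · exact ⟨δ, hγδ, hδτ, h2⟩
    · have hlt := X.face_dim hδτ
      obtain ⟨μ, h1, h2', h3⟩ := ih δ τ (by omega) hδτ (by omega)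
      exact ⟨μ, X.face_trans hγδ h1, h2', h3⟩

variable (hF : IsDiscreteMorse X F) (hgen : IsGeneric X F)

include hF in
lemma lemL2 {γ τ : X.Cell} (hf : X.face γ τ) (hd : X.dim τ = X.dim γ + 2) :
    ∃ δ, X.face γ δ ∧ X.face δ τ ∧ X.dim δ + 1 = X.dim τ ∧ F γ < F δ := by
  obtain ⟨δ₁, δ₂, hne, hd₁, hd₂, h1, h2, h3, h4⟩ := X.diamond hf hd
  by_cases hc : F δ₁ ≤ F γ
  · by_cases hc2 : F δ₂ ≤ F γ
    · exact absurd ((hF γ).1 (show δ₁ ∈ _ from ⟨h1, hd₁, hc⟩)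
        (show δ₂ ∈ _ from ⟨h3, hd₂, hc2⟩)) hne
    · exact ⟨δ₂, h3, h4, by omega, lt_of_not_ge hc2⟩
  · exact ⟨δ₁, h1, h2, by omega, lt_of_not_ge hc⟩

include hF hgen in
lemma lemL : ∀ {γ τ : X.Cell}, X.face γ τ → X.dim γ + 2 ≤ X.dim τ →
    ∃ δ, X.face γ δ ∧ X.face δ τ ∧ X.dim δ + 1 = X.dim τ ∧ F γ < F δ := by
  suffices h : ∀ n (γ τ : X.Cell), X.dim τ ≤ n → X.face γ τ → X.dim γ + 2 ≤ X.dim τ →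
      ∃ δ, X.face γ δ ∧ X.face δ τ ∧ X.dim δ + 1 = X.dim τ ∧ F γ < F δ by
    intro γ τ h1 h2; exact h _ γ τ le_rfl h1 h2
  intro n
  induction n with
  | zero => intro γ τ hn _ hd; omega
  | succ n ih =>
    intro γ τ hn hf hd
    by_cases h2 : X.dim τ = X.dim γ + 2
    · exact lemL2 X F hF hf h2
    · obtain ⟨μ, hγμ, hμτ, hμd⟩ := chain X hf hd
      have hdγμ : X.dim γ + 2 ≤ X.dim μ := by omega
      rcases lt_or_gt_of_ne (hgen hγμ) with hlt | hgt
      · exact ⟨μ, hγμ, hμτ, hμd, hlt⟩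
      · obtain ⟨δ', hγδ', hδ'μ, hδ'd, hvγδ'⟩ := ih γ μ (by omega) hγμ hdγμ
        obtain ⟨δ, hδ'δ, hδτ, hδd, hv2⟩ :=
          lemL2 X F hF (X.face_trans hδ'μ hμτ) (by omega)
        exact ⟨δ, X.face_trans hγδ' hδ'δ, hδτ, hδd, lt_trans hvγδ' hv2⟩

include hF hgen in
/-- top of a violating pair has a unique exceptional facet dominating all its faces. -/
lemma delta_spec {β : X.Cell} (hbad : Bad X F β) :
    ∃ δ, X.face δ β ∧ X.dim δ + 1 = X.dim β ∧ F β < F δ ∧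
      ∀ x, X.face x β → x ≠ δ → F x < F δ := by
  obtain ⟨γ₀, ⟨hγf, hγd⟩, hγv⟩ := hbad
  obtain ⟨δ, hγδ, hδβ, hδd, hγltδ⟩ := lemL X F hF hgen hγf hγd
  have hβδ : F β < F δ := lt_of_le_of_lt hγv hγltδ
  refine ⟨δ, hδβ, hδd, hβδ, ?_⟩
  intro x hxβ hxne
  rcases lt_or_gt_of_ne (hgen hxβ) with h | h
  · exact lt_trans h hβδ
  · have hxd := X.face_dim hxβ
    by_cases hc : X.dim x + 1 = X.dim β
    · exact absurd ((hF β).2 (show x ∈ _ from ⟨hxβ, hc, le_of_lt h⟩)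
        (show δ ∈ _ from ⟨hδβ, hδd, le_of_lt hβδ⟩)) hxne
    · obtain ⟨δx, -, hδxβ, hδxd, hxltδx⟩ := lemL X F hF hgen hxβ (by omega)
      have heq : δx = δ := (hF β).2
        (show δx ∈ _ from ⟨hδxβ, hδxd, le_of_lt (lt_trans h hxltδx)⟩)
        (show δ ∈ _ from ⟨hδβ, hδd, le_of_lt hβδ⟩)
      rw [← heq]
      exact hxltδx

include hF hgen in
lemma A1 {β τ : X.Cell} (hface : X.face β τ) (hd : X.dim β + 1 = X.dim τ)
    (hv : F β < F τ) : G X F β < G X F τ := by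
  by_cases hbτ : Bad X F τ
  · by_cases hbβ : Bad X F β
    · obtain ⟨s1, -, -⟩ := G_bad_spec X F hbβ
      obtain ⟨s2, -, -⟩ := G_bad_spec X F hbτ
      obtain ⟨α₀, hα₀S, -⟩ := hbβ
      have hMM : MG X F β ≤ MG X F τ := by
        apply MG_le X F ⟨α₀, hα₀S⟩
        intro α hα
        exact le_MG X F ⟨X.face_trans hα.1 hface, by have := hα.2; omega⟩
      have hcast : (X.dim τ : ℝ) = (X.dim β : ℝ) + 1 := by exact_mod_cast hd.symm
      have h1 := s1.2
      have h2 := s2.1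
      rw [hcast] at h2
      linarith
    · rw [G_good X F hbβ]
      exact lt_of_lt_of_le hv (G_ge X F τ)
  · rw [G_good X F hbτ]
    by_cases hbβ : Bad X F β
    · obtain ⟨x₀, hx₀, hVeq⟩ := V_mem X F β
      have hx₀lt : F x₀ < F τ := by
        rcases hx₀ with rfl | hx₀f
        · exact hv
        · have hfxτ := X.face_trans hx₀f hface
          have hdx : X.dim x₀ + 2 ≤ X.dim τ := by have := X.face_dim hx₀f; omega
          by_contra hc
          exact hbτ ⟨x₀, ⟨hfxτ, hdx⟩, le_of_not_gt hc⟩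
      have hgap := gapF X F hx₀lt
      have hB2 := G_le X F β
      have hlt := eps_lt X F (X.dim β) (dim_le X β)
      rw [hVeq] at hB2
      linarith
    · rw [G_good X F hbβ]
      exact hv

include hF hgen in
lemma A2 {β τ : X.Cell} (hface : X.face β τ) (hd : X.dim β + 1 = X.dim τ)
    (hv : F τ < F β) : G X F τ < G X F β := by
  by_cases hbτ : Bad X F τ
  · obtain ⟨δ, hδτf, hδd, hτδ, hall⟩ := delta_spec X F hF hgen hbτ
    have hβδ : β = δ := (hF τ).2
      (show β ∈ _ from ⟨hface, hd, le_of_lt hv⟩)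
      (show δ ∈ _ from ⟨hδτf, hδd, le_of_lt hτδ⟩)
    subst hβδ
    have hbβ : ¬ Bad X F β := by
      rintro ⟨α, ⟨hαf, hαd⟩, hαv⟩
      have hne : α ≠ β := by
        have := X.face_dim hαf
        intro h; subst h; omega
      have h1 : F α < F β := hall α (X.face_trans hαf hface) hne
      linarith
    rw [G_good X F hbβ]
    obtain ⟨s2, -, -⟩ := G_bad_spec X F hbτ
    have hhi := s2.2
    rcases hbτ with ⟨α₀, hα₀S, -⟩
    obtain ⟨αm, hαmS, hMGeq⟩ := MG_mem X F ⟨α₀, hα₀S⟩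
    have ihm := G_le X F αm
    obtain ⟨x₀, hx₀, hVeq⟩ := V_mem X F αm
    have hx₀β : F x₀ < F β := by
      apply hall
      · rcases hx₀ with rfl | hx₀f
        · exact hαmS.1
        · exact X.face_trans hx₀f hαmS.1
      · rcases hx₀ with rfl | hx₀f
        · have := hαmS.2
          intro h; subst h; omega
        · have h1 := X.face_dim hx₀f
          have h2 := hαmS.2
          intro h; subst h; omega
    have hgap := gapF X F hx₀β
    have hsq := csq (X.dim αm) (X.dim τ) hαmS.2
    have hmul := mul_le_mul_of_nonneg_right hsq (eps_nonneg X F)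
    have hlt := eps_lt X F (X.dim τ) (dim_le X τ)
    rw [hVeq] at ihm
    rw [hMGeq] at hhi
    nlinarith
  · rw [G_good X F hbτ]
    exact lt_of_lt_of_le hv (G_ge X F β)

include hgen in
lemma G_generic : IsGeneric X (G X F) := by
  intro α β hface
  have hd := X.face_dim hface
  by_cases hbβ : Bad X F β
  · have h := (G_bad_spec X F hbβ).2.2
    intro he
    exact h ⟨α, hd, he⟩
  · by_cases hbα : Bad X F α
    · have h := (G_bad_spec X F hbα).2.1
      rw [G_good X F hbβ]
      intro he
      exact h ⟨β, he.symm⟩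
    · rw [G_good X F hbβ, G_good X F hbα]
      exact hgen hface

lemma G_tame : IsTame X (G X F) := by
  intro α β hface hd
  by_cases hbβ : Bad X F β
  · have s := ((G_bad_spec X F hbβ).1).1
    have h1 : G X F α ≤ MG X F β := le_MG X F ⟨hface, hd⟩
    have h2 : (0:ℝ) < (X.dim β : ℝ) * eps X F := by
      apply mul_pos _ (eps_pos X F)
      exact_mod_cast (show 0 < X.dim β by omega)
    linarith
  · rw [G_good X F hbβ]
    have hB := G_le X F α
    obtain ⟨x₀, hx₀, hVeq⟩ := V_mem X F α
    have hx₀lt : F x₀ < F β := by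
      rcases hx₀ with rfl | hx₀f
      · by_contra hc
        exact hbβ ⟨x₀, ⟨hface, hd⟩, le_of_not_gt hc⟩
      · have h1 := X.face_dim hx₀f
        by_contra hc
        exact hbβ ⟨x₀, ⟨X.face_trans hx₀f hface, by omega⟩, le_of_not_gt hc⟩
    have hgap := gapF X F hx₀lt
    have hlt := eps_lt X F (X.dim α) (dim_le X α)
    rw [hVeq] at hB
    linarith

include hF hgen in
lemma coface_iff {α τ : X.Cell} (hτf : X.face α τ) (hτd : X.dim τ = X.dim α + 1) :
    (G X F τ ≤ G X F α ↔ F τ ≤ F α) := by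
  constructor
  · intro h
    by_contra hc
    push_neg at hc
    have := A1 X F hF hgen hτf (by omega) hc
    linarith
  · intro h
    have h' : F τ < F α := lt_of_le_of_ne h (hgen hτf).symm
    exact le_of_lt (A2 X F hF hgen hτf (by omega) h')

include hF hgen in
lemma face_iff {γ α : X.Cell} (hγf : X.face γ α) (hγd : X.dim γ + 1 = X.dim α) :
    (G X F α ≤ G X F γ ↔ F α ≤ F γ) := by
  constructor
  · intro h
    by_contra hc
    push_neg at hc
    have := A1 X F hF hgen hγf hγd hc
    linarith
  · intro h
    have h' : F α < F γ := lt_of_le_of_ne h (hgen hγf).symm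
    exact le_of_lt (A2 X F hF hgen hγf hγd h')

end Stmt10

end Stmt10Aux

/-- Lemma 3.2: Every generic discrete Morse function `F` on a finite
regular cell complex can be modified to a tame generic discrete Morse function `F'` with
exactly the same critical cells; moreover `F'` agrees with `F` on every cell `β` that
does not appear as the top of a tameness-violating pair of `F`. -/
theorem stmt10 (X : RegularCellComplex) (F : X.Cell → ℝ)
    (hF : IsDiscreteMorse X F) (hgen : IsGeneric X F) :
    ∃ F' : X.Cell → ℝ,
      IsDiscreteMorse X F' ∧ IsGeneric X F' ∧ IsTame X F' ∧
      (∀ α, IsCritical X F' α ↔ IsCritical X F α) ∧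
      (∀ β, (∀ α, X.face α β → X.dim α + 2 ≤ X.dim β → F α < F β) → F' β = F β) := by
  classical
  refine ⟨Stmt10.G X F, ?_, Stmt10.G_generic X F hgen, Stmt10.G_tame X F, ?_, ?_⟩
  · -- discrete Morse
    intro α
    constructor
    · intro x hx y hy
      obtain ⟨h1, h2, h3⟩ := hx
      obtain ⟨g1, g2, g3⟩ := hy
      exact (hF α).1
        (show x ∈ _ from ⟨h1, h2, (Stmt10.coface_iff X F hF hgen h1 h2).1 h3⟩)
        (show y ∈ _ from ⟨g1, g2, (Stmt10.coface_iff X F hF hgen g1 g2).1 g3⟩)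
    · intro x hx y hy
      obtain ⟨h1, h2, h3⟩ := hx
      obtain ⟨g1, g2, g3⟩ := hy
      exact (hF α).2
        (show x ∈ _ from ⟨h1, h2, (Stmt10.face_iff X F hF hgen h1 h2).1 h3⟩)
        (show y ∈ _ from ⟨g1, g2, (Stmt10.face_iff X F hF hgen g1 g2).1 g3⟩)
  · -- critical cells coincide
    intro α
    have e1 : (∃ β, X.face α β ∧ X.dim β = X.dim α + 1 ∧ Stmt10.G X F β ≤ Stmt10.G X F α)
        ↔ (∃ β, X.face α β ∧ X.dim β = X.dim α + 1 ∧ F β ≤ F α) := by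
      apply exists_congr
      intro β
      constructor
      · rintro ⟨h1, h2, h3⟩
        exact ⟨h1, h2, (Stmt10.coface_iff X F hF hgen h1 h2).1 h3⟩
      · rintro ⟨h1, h2, h3⟩
        exact ⟨h1, h2, (Stmt10.coface_iff X F hF hgen h1 h2).2 h3⟩
    have e2 : (∃ γ, X.face γ α ∧ X.dim γ + 1 = X.dim α ∧ Stmt10.G X F α ≤ Stmt10.G X F γ)
        ↔ (∃ γ, X.face γ α ∧ X.dim γ + 1 = X.dim α ∧ F α ≤ F γ) := by
      apply exists_congr
      intro γ
      constructor
      · rintro ⟨h1, h2, h3⟩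
        exact ⟨h1, h2, (Stmt10.face_iff X F hF hgen h1 h2).1 h3⟩
      · rintro ⟨h1, h2, h3⟩
        exact ⟨h1, h2, (Stmt10.face_iff X F hF hgen h1 h2).2 h3⟩
    rw [IsCritical, IsCritical, e1, e2]
  · -- agreement on non-violating cells
    intro β h
    apply Stmt10.G_good
    rintro ⟨α, ⟨h1, h2⟩, h3⟩
    exact absurd (h α h1 h2) (not_lt.mpr h3)
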